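/- Let a < b be real numbers, let f : [a,b] → ℝ be twice differentiable with a real constant m such that m ≤ f''(x) for all x ∈ [a,b], and let g : [a,b] → [0,1] be integrable and symmetric about (a+b)/2 (i.e. g(x) = g(a+b−x) for all x ∈ [a,b]). Then (b−a)·( (f(a)+f(b))/2 − (1/(b−a))∫_a^b f(t) dt − m(b−a)²/12 ) ≥ ((f(a)+f(b))/2)·∫_a^b g(t) dt − ∫_a^b f(t)g(t) dt − (m/2)·∫_a^b (t−a)(b−t)g(t) dt ≥ 0. -/

import Mathlib

open MeasureTheory intervalIntegral

/-- Remark (estimate of precision in (1), lower-bound version): with `m ≤ f''` on `[a,b]`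
and `g : [a,b] → [0,1]` integrable and symmetric about `(a+b)/2`,
`(b−a)·((f(a)+f(b))/2 − (1/(b−a))∫f − m(b−a)²/12)
  ≥ ((f(a)+f(b))/2)·∫g − ∫f·g − (m/2)·∫(t−a)(b−t)g(t) ≥ 0`. -/
theorem fejer_stmt_4 (a b : ℝ) (hab : a < b) (f f' f'' g : ℝ → ℝ) (m : ℝ)
    (hf' : ∀ x ∈ Set.Icc a b, HasDerivWithinAt f (f' x) (Set.Icc a b) x)
    (hf'' : ∀ x ∈ Set.Icc a b, HasDerivWithinAt f' (f'' x) (Set.Icc a b) x)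
    (hm : ∀ x ∈ Set.Icc a b, m ≤ f'' x)
    (hg : IntervalIntegrable g volume a b)
    (hg01 : ∀ x ∈ Set.Icc a b, g x ∈ Set.Icc (0 : ℝ) 1)
    (hgsymm : ∀ x ∈ Set.Icc a b, g x = g (a + b - x)) :
    (f a + f b) / 2 * (∫ t in a..b, g t) - (∫ t in a..b, f t * g t)
        - m / 2 * (∫ t in a..b, (t - a) * (b - t) * g t)
      ≤ (b - a) * ((f a + f b) / 2 - (1 / (b - a)) * (∫ t in a..b, f t)
          - m * (b - a) ^ 2 / 12) ∧
    0 ≤ (f a + f b) / 2 * (∫ t in a..b, g t) - (∫ t in a..b, f t * g t)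
        - m / 2 * (∫ t in a..b, (t - a) * (b - t) * g t) := by
  have hab' : a ≤ b := hab.le
  have hba : (0:ℝ) < b - a := by linarith
  have hne : b - a ≠ 0 := hba.ne'
  have huIcc : Set.uIcc a b = Set.Icc a b := Set.uIcc_of_le hab'
  have hmem : ∀ t ∈ Set.Icc a b, a + b - t ∈ Set.Icc a b := by
    intro t ht
    exact ⟨by linarith [ht.2], by linarith [ht.1]⟩
  have cf : ContinuousOn f (Set.Icc a b) := fun x hx => (hf' x hx).continuousWithinAt
  have cP : Continuous (fun t : ℝ => (t - a) * (b - t)) :=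
    (continuous_id.sub continuous_const).mul (continuous_const.sub continuous_id)
  -- convexity of φ
  have hconv : ConvexOn ℝ (Set.Icc a b)
      (fun t => f t + m / 2 * ((t - a) * (b - t))) := by
    refine convexOn_of_hasDerivWithinAt2_nonneg (convex_Icc a b)
      (f' := fun t => f' t + m / 2 * (a + b - 2 * t))
      (f'' := fun t => f'' t - m) ?_ ?_ ?_ ?_
    · exact cf.add ((continuous_const.mul cP : Continuous fun t => m / 2 * ((t - a) * (b - t)))).continuousOn
    · intro x hx
      have hx' : x ∈ Set.Icc a b := interior_subset hx
      have h1 : HasDerivWithinAt f (f' x) (interior (Set.Icc a b)) x :=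
        (hf' x hx').mono interior_subset
      have h2 : HasDerivAt (fun t : ℝ => m / 2 * ((t - a) * (b - t)))
          (m / 2 * (a + b - 2 * x)) x := by
        have h := (((hasDerivAt_id x).sub_const a).mul
          ((hasDerivAt_const x b).sub (hasDerivAt_id x))).const_mul (m / 2)
        simp only [id_eq, Pi.sub_apply] at h
        refine h.congr_deriv ?_
        ring
      exact h1.add h2.hasDerivWithinAt
    · intro x hx
      have hx' : x ∈ Set.Icc a b := interior_subset hx
      have h1 : HasDerivWithinAt f' (f'' x) (interior (Set.Icc a b)) x :=
        (hf'' x hx').mono interior_subset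
      have h2 : HasDerivAt (fun t : ℝ => m / 2 * (a + b - 2 * t)) (-m) x := by
        have h := (((hasDerivAt_const x (a + b)).sub
          ((hasDerivAt_id x).const_mul 2))).const_mul (m / 2)
        simp only [id_eq] at h
        refine h.congr_deriv ?_
        ring
      have h3 := h1.add h2.hasDerivWithinAt
      show HasDerivWithinAt _ (f'' x - m) _ _
      have he : f'' x - m = f'' x + -m := by ring
      rw [he]
      exact h3
    · intro x hx
      have hx' : x ∈ Set.Icc a b := interior_subset hx
      show 0 ≤ f'' x - m
      linarith [hm x hx']
  -- key pointwise inequality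
  have hkey : ∀ t ∈ Set.Icc a b, f t + f (a + b - t) + m * ((t - a) * (b - t)) ≤ f a + f b := by
    intro t ht
    have hlam : 0 ≤ (b - t) / (b - a) := div_nonneg (by linarith [ht.2]) hba.le
    have hmu : 0 ≤ (t - a) / (b - a) := div_nonneg (by linarith [ht.1]) hba.le
    have hsum : (b - t) / (b - a) + (t - a) / (b - a) = 1 := by field_simp; ring
    have hmema : a ∈ Set.Icc a b := Set.left_mem_Icc.2 hab'
    have hmemb : b ∈ Set.Icc a b := Set.right_mem_Icc.2 hab'
    have h1 := hconv.2 hmema hmemb hlam hmu hsum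
    have h2 := hconv.2 hmema hmemb hmu hlam (by linarith)
    simp only [smul_eq_mul] at h1 h2
    have e1 : (b - t) / (b - a) * a + (t - a) / (b - a) * b = t := by
      field_simp
      ring
    have e2 : (t - a) / (b - a) * a + (b - t) / (b - a) * b = a + b - t := by
      field_simp
      ring
    rw [e1] at h1
    rw [e2] at h2
    set A := f a + m / 2 * ((a - a) * (b - a)) with hA
    set B := f b + m / 2 * ((b - a) * (b - b)) with hB
    have e3 : (b - t) / (b - a) * A + (t - a) / (b - a) * B
        + ((t - a) / (b - a) * A + (b - t) / (b - a) * B)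
        = ((b - t) / (b - a) + (t - a) / (b - a)) * (A + B) := by ring
    rw [hsum, one_mul] at e3
    have h3 : f t + m / 2 * ((t - a) * (b - t))
        + (f (a + b - t) + m / 2 * ((a + b - t - a) * (b - (a + b - t)))) ≤ A + B := by
      linarith [h1, h2, e3.le, e3.ge]
    rw [hA, hB] at h3
    nlinarith [h3]
  -- the function H
  set H : ℝ → ℝ := fun t =>
    (f a + f b) / 2 - (f t + f (a + b - t)) / 2 - m / 2 * ((t - a) * (b - t)) with hHdef
  have hH0 : ∀ t ∈ Set.Icc a b, 0 ≤ H t := by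
    intro t ht
    have := hkey t ht
    show 0 ≤ (f a + f b) / 2 - (f t + f (a + b - t)) / 2 - m / 2 * ((t - a) * (b - t))
    linarith
  -- continuity facts
  have cσ : ContinuousOn (fun t => f (a + b - t)) (Set.Icc a b) := by
    refine cf.comp (continuous_const.sub continuous_id).continuousOn ?_
    intro t ht
    exact hmem t ht
  have cH : ContinuousOn H (Set.Icc a b) :=
    (continuousOn_const.sub ((cf.add cσ).div_const 2)).sub
      (((continuous_const.mul cP : Continuous fun t => m / 2 * ((t - a) * (b - t)))).continuousOn)
  -- integrability facts
  have cfu : ContinuousOn f (Set.uIcc a b) := huIcc ▸ cf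
  have cσu : ContinuousOn (fun t => f (a + b - t)) (Set.uIcc a b) := huIcc ▸ cσ
  have cHu : ContinuousOn H (Set.uIcc a b) := huIcc ▸ cH
  have intf : IntervalIntegrable f volume a b := cfu.intervalIntegrable
  have intσ : IntervalIntegrable (fun t => f (a + b - t)) volume a b := cσu.intervalIntegrable
  have intH : IntervalIntegrable H volume a b := cHu.intervalIntegrable
  have intHg : IntervalIntegrable (fun t => H t * g t) volume a b := hg.continuousOn_mul cHu
  have intfg : IntervalIntegrable (fun t => f t * g t) volume a b := hg.continuousOn_mul cfu
  have intσg : IntervalIntegrable (fun t => f (a + b - t) * g t) volume a b :=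
    hg.continuousOn_mul cσu
  have intPg : IntervalIntegrable (fun t => (t - a) * (b - t) * g t) volume a b :=
    hg.continuousOn_mul cP.continuousOn
  -- symmetry identities
  have sym : ∫ t in a..b, f (a + b - t) * g t = ∫ t in a..b, f t * g t := by
    have e1 : ∫ t in a..b, f (a + b - t) * g t
        = ∫ t in a..b, f (a + b - t) * g (a + b - t) := by
      refine intervalIntegral.integral_congr ?_
      intro x hx
      rw [huIcc] at hx
      show f (a + b - x) * g x = f (a + b - x) * g (a + b - x)
      rw [← hgsymm x hx]
    have e2 : ∫ t in a..b, f (a + b - t) * g (a + b - t) = ∫ t in a..b, f t * g t := by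
      have h := intervalIntegral.integral_comp_sub_left (a := a) (b := b)
        (fun t => f t * g t) (a + b)
      simpa using h
    rw [e1, e2]
  have symF : ∫ t in a..b, f (a + b - t) = ∫ t in a..b, f t := by
    have h := intervalIntegral.integral_comp_sub_left (a := a) (b := b) f (a + b)
    simpa using h
  -- polynomial integral
  have hPint : ∫ t in a..b, (t - a) * (b - t) = (b - a) ^ 3 / 6 := by
    have hderiv : ∀ x ∈ Set.uIcc a b,
        HasDerivAt (fun t : ℝ => -(t ^ 3) / 3 + (a + b) * t ^ 2 / 2 - a * b * t)
          ((x - a) * (b - x)) x := by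
      intro x _
      have h1 : HasDerivAt (fun t : ℝ => -(t ^ 3) / 3) (-(3 * x ^ 2) / 3) x := by
        have := ((hasDerivAt_pow 3 x).neg).div_const 3
        simpa using this
      have h2 : HasDerivAt (fun t : ℝ => (a + b) * t ^ 2 / 2) ((a + b) * (2 * x) / 2) x := by
        have := (((hasDerivAt_pow 2 x)).const_mul (a + b)).div_const 2
        simpa using this
      have h3 : HasDerivAt (fun t : ℝ => a * b * t) (a * b * 1) x := by
        have := (hasDerivAt_id x).const_mul (a * b)
        simpa using this
      have h := (h1.add h2).sub h3
      refine h.congr_deriv ?_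
      ring
    have hint : IntervalIntegrable (fun t => (t - a) * (b - t)) volume a b :=
      cP.continuousOn.intervalIntegrable
    rw [intervalIntegral.integral_eq_sub_of_hasDerivAt hderiv hint]
    ring
  -- linearity identities
  have eqA : ∫ t in a..b, H t * g t
      = (f a + f b) / 2 * (∫ t in a..b, g t) - (∫ t in a..b, f t * g t)
        - m / 2 * (∫ t in a..b, (t - a) * (b - t) * g t) := by
    have e0 : ∫ t in a..b, H t * g t
        = ∫ t in a..b, ((f a + f b) / 2 * g t
            - (f t * g t + f (a + b - t) * g t) / 2
            - m / 2 * ((t - a) * (b - t) * g t)) := by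
      refine intervalIntegral.integral_congr ?_
      intro x _
      show H x * g x = _
      simp only [hHdef]
      ring
    rw [e0]
    rw [intervalIntegral.integral_sub (((hg.const_mul _).sub
      ((intfg.add intσg).div_const 2))) (intPg.const_mul _)]
    rw [intervalIntegral.integral_sub (hg.const_mul _) ((intfg.add intσg).div_const 2)]
    rw [intervalIntegral.integral_const_mul, intervalIntegral.integral_const_mul,
      intervalIntegral.integral_div, intervalIntegral.integral_add intfg intσg, sym]
    ring
  have eqB : ∫ t in a..b, H t
      = (f a + f b) / 2 * (b - a) - (∫ t in a..b, f t) - m / 2 * ((b - a) ^ 3 / 6) := by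
    have hintP : IntervalIntegrable (fun t => (t - a) * (b - t)) volume a b :=
      cP.continuousOn.intervalIntegrable
    have e0 : ∫ t in a..b, H t
        = ∫ t in a..b, ((f a + f b) / 2 - (f t + f (a + b - t)) / 2
            - m / 2 * ((t - a) * (b - t))) := rfl
    rw [e0]
    rw [intervalIntegral.integral_sub (intervalIntegrable_const.sub
      ((intf.add intσ).div_const 2)) (hintP.const_mul _)]
    rw [intervalIntegral.integral_sub intervalIntegrable_const ((intf.add intσ).div_const 2)]
    rw [intervalIntegral.integral_const, intervalIntegral.integral_const_mul,
      intervalIntegral.integral_div, intervalIntegral.integral_add intf intσ, symF, hPint]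
    rw [smul_eq_mul]
    ring
  -- main inequalities
  have ineq1 : 0 ≤ ∫ t in a..b, H t * g t :=
    intervalIntegral.integral_nonneg hab' fun x hx =>
      mul_nonneg (hH0 x hx) (hg01 x hx).1
  have ineq2 : (∫ t in a..b, H t * g t) ≤ ∫ t in a..b, H t :=
    intervalIntegral.integral_mono_on hab' intHg intH fun x hx =>
      mul_le_of_le_one_right (hH0 x hx) (hg01 x hx).2
  constructor
  · rw [← eqA]
    calc (∫ t in a..b, H t * g t) ≤ ∫ t in a..b, H t := ineq2
      _ = (b - a) * ((f a + f b) / 2 - 1 / (b - a) * (∫ t in a..b, f t)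
          - m * (b - a) ^ 2 / 12) := by
        rw [eqB]
        field_simp
        ring
  · rw [← eqA]
    exact ineq1
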